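/- Let B be an integral domain containing a field k of characteristic zero, S ⊆ B \ {0} a multiplicative set, G a totally ordered abelian group, DEG : S⁻¹B → G ∪ {−∞} a degree function on the localization S⁻¹B, and deg : B → G ∪ {−∞} the restriction of DEG to B. If DEG is tame over k, then deg is tame over k. -/

import Mathlib

section DegreePrelude

variable {B : Type*} [CommRing B] {G : Type*} [AddCommGroup G] [LinearOrder G] [IsOrderedAddMonoid G]

/-- A degree function on `B` with values in `G ∪ {-∞}` -/
def IsDegreeFunction (deg : B → WithBot G) : Prop :=
  (∀ x : B, deg x = ⊥ ↔ x = 0) ∧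
  (∀ x y : B, deg (x * y) = deg x + deg y) ∧
  (∀ x y : B, deg (x + y) ≤ max (deg x) (deg y))

/-- `degDelta deg D x = deg (D x) - deg x` (with value `-∞` if `D x = 0`). -/
noncomputable def degDelta (deg : B → WithBot G) (D : B → B) (x : B) : WithBot G :=
  (deg (D x)).map fun a => a - (deg x).unbotD 0

/-- The set `{deg (D x) - deg x : x ∈ B \ {0}}`. -/
def degDeltaSet (deg : B → WithBot G) (D : B → B) : Set (WithBot G) :=
  {m | ∃ x : B, x ≠ 0 ∧ degDelta deg D x = m}

/-- `deg (D)` is defined, i.e. the set `{deg (D x) - deg x : x ≠ 0}` has a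
greatest element in `G ∪ {-∞}`. -/
def DegreeDefinedAt (deg : B → WithBot G) (D : B → B) : Prop :=
  ∃ M, IsGreatest (degDeltaSet deg D) M

end DegreePrelude

open TrivSqZeroExt

section Aux

variable {k B B' : Type*} [Field k] [CommRing B] [CommRing B']
  [Algebra k B] [Algebra B B'] [Algebra k B'] [IsScalarTower k B B']
  (S : Submonoid B) [IsLocalization S B']

/-- The algebra hom `B →ₐ[k] B'[ε]`, `b ↦ (alg b, alg (D b))`. -/
def locExtHom (D : Derivation k B B) : B →ₐ[k] TrivSqZeroExt B' B' where
  toFun b := ⟨algebraMap B B' b, algebraMap B B' (D b)⟩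
  map_one' := by
    refine TrivSqZeroExt.ext ?_ ?_ <;> simp
  map_mul' x y := by
    refine TrivSqZeroExt.ext ?_ ?_
    · show algebraMap B B' (x * y) = algebraMap B B' x * algebraMap B B' y
      rw [map_mul]
    · simp only [snd_mul, Derivation.leibniz, smul_eq_mul, map_add, map_mul,
        op_smul_eq_smul]
      show algebraMap B B' x * algebraMap B B' (D y) + algebraMap B B' y * algebraMap B B' (D x)
        = algebraMap B B' x • algebraMap B B' (D y) + MulOpposite.op (algebraMap B B' y) • algebraMap B B' (D x)
      rw [smul_eq_mul, op_smul_eq_mul]; ring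
  map_zero' := by
    refine TrivSqZeroExt.ext ?_ ?_ <;> simp
  map_add' x y := by
    refine TrivSqZeroExt.ext ?_ ?_
    · show algebraMap B B' (x + y) = algebraMap B B' x + algebraMap B B' y
      rw [map_add]
    · show algebraMap B B' (D (x + y)) = algebraMap B B' (D x) + algebraMap B B' (D y)
      rw [map_add, map_add]
  commutes' c := by
    rw [TrivSqZeroExt.algebraMap_eq_inl']
    refine TrivSqZeroExt.ext ?_ ?_
    · simp [← IsScalarTower.algebraMap_apply]
    · simp [Derivation.map_algebraMap]

lemma locExtHom_isUnit (D : Derivation k B B) (s : S) :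
    IsUnit ((locExtHom (B' := B') D).toRingHom s) := by
  rw [isUnit_iff_isUnit_fst]
  exact IsLocalization.map_units B' s

/-- The lift `B' →+* B'[ε]` of `locExtHom`. -/
noncomputable def locExtLift (D : Derivation k B B) : B' →+* TrivSqZeroExt B' B' :=
  IsLocalization.lift (M := S) (locExtHom_isUnit S D)

lemma locExtLift_algebraMap (D : Derivation k B B) (b : B) :
    locExtLift (B' := B') S D (algebraMap B B' b) = locExtHom (B' := B') D b :=
  IsLocalization.lift_eq _ _

lemma fst_locExtLift (D : Derivation k B B) (x : B') :
    fst (locExtLift (B' := B') S D x) = x := by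
  have : ((fstHom k B' B').toRingHom.comp (locExtLift (B' := B') S D)) = RingHom.id B' := by
    apply IsLocalization.ringHom_ext S
    ext b
    show fst (locExtLift (B' := B') S D (algebraMap B B' b)) = algebraMap B B' b
    rw [locExtLift_algebraMap]
    rfl
  exact DFunLike.congr_fun this x

/-- Extension of a derivation to the localization. -/
noncomputable def locExtDer (D : Derivation k B B) : Derivation k B' B' where
  toFun x := snd (locExtLift (B' := B') S D x)
  map_add' x y := by simp
  map_smul' c x := by
    have h1 : (c • x : B') = algebraMap B B' (algebraMap k B c) * x := by
      rw [← IsScalarTower.algebraMap_apply, Algebra.smul_def]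
    show snd (locExtLift (B' := B') S D (c • x)) = c • snd (locExtLift (B' := B') S D x)
    rw [h1, map_mul, locExtLift_algebraMap]
    have h2 : locExtHom (B' := B') D (algebraMap k B c)
        = inl (algebraMap B B' (algebraMap k B c)) := by
      refine TrivSqZeroExt.ext rfl ?_
      show algebraMap B B' (D (algebraMap k B c)) = (0 : B')
      rw [Derivation.map_algebraMap, map_zero]
    rw [h2]
    simp only [snd_mul, fst_inl, snd_inl, smul_zero, op_smul_eq_smul, zero_smul]
    rw [add_zero, smul_eq_mul, ← IsScalarTower.algebraMap_apply, ← Algebra.smul_def]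
  map_one_eq_zero' := by simp
  leibniz' x y := by
    show snd (locExtLift (B' := B') S D (x * y)) = x • snd (locExtLift (B' := B') S D y)
      + y • snd (locExtLift (B' := B') S D x)
    rw [map_mul, snd_mul, fst_locExtLift, fst_locExtLift, op_smul_eq_smul]

lemma locExtDer_algebraMap (D : Derivation k B B) (b : B) :
    locExtDer (B' := B') S D (algebraMap B B' b) = algebraMap B B' (D b) := by
  show snd (locExtLift (B' := B') S D (algebraMap B B' b)) = _
  rw [locExtLift_algebraMap]
  rfl

end Aux

theorem stmt5 (k B B' : Type*) [Field k] [CharZero k] [CommRing B] [IsDomain B]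
    [Algebra k B] [CommRing B'] [Algebra B B'] [Algebra k B'] [IsScalarTower k B B']
    (S : Submonoid B) (hS : (0 : B) ∉ S) [IsLocalization S B']
    {G : Type*} [AddCommGroup G] [LinearOrder G] [IsOrderedAddMonoid G]
    (DEG : B' → WithBot G) (hDEG : IsDegreeFunction DEG)
    (deg : B → WithBot G) (hres : ∀ b : B, deg b = DEG (algebraMap B B' b))
    (htame : ∀ D : Derivation k B' B', DegreeDefinedAt DEG ⇑D) :
    ∀ D : Derivation k B B, DegreeDefinedAt deg ⇑D := by
  intro D
  obtain ⟨hbot, hmul, hadd⟩ := hDEG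
  have hSle : S ≤ nonZeroDivisors B := fun s hs =>
    mem_nonZeroDivisors_of_ne_zero (fun h => hS (h ▸ hs))
  have hinj : Function.Injective (algebraMap B B') := IsLocalization.injective B' hSle
  haveI : Nontrivial B' :=
    ⟨⟨0, 1, fun h => zero_ne_one (α := B) (hinj (by rw [map_zero, map_one]; exact h))⟩⟩
  set A := algebraMap B B' with hA
  set D' := locExtDer (k := k) (B' := B') S D with hD'
  have hAD : ∀ b : B, D' (A b) = A (D b) := fun b => locExtDer_algebraMap S D b
  -- basic facts about DEG
  have hne : ∀ {x : B'}, x ≠ 0 → ∃ g : G, DEG x = ↑g := by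
    intro x hx
    obtain ⟨g, hg⟩ := WithBot.ne_bot_iff_exists.mp (fun h => hx ((hbot x).mp h))
    exact ⟨g, hg.symm⟩
  have hone : DEG 1 = 0 := by
    obtain ⟨g, hg⟩ := hne (one_ne_zero (α := B'))
    have h := hmul 1 1
    rw [mul_one, hg, ← WithBot.coe_add, WithBot.coe_inj] at h
    rw [hg, left_eq_add.mp h, WithBot.coe_zero]
  have gzero : ∀ g : G, g + g = 0 → g = 0 := by
    intro g hg
    rcases lt_trichotomy g 0 with h | h | h
    · exact absurd hg (ne_of_lt (add_neg h h))
    · exact h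
    · exact absurd hg (ne_of_gt (add_pos h h))
  have hneg : ∀ x : B', DEG (-x) = DEG x := by
    have hm1 : DEG (-1 : B') = 0 := by
      obtain ⟨g, hg⟩ := hne (neg_ne_zero.mpr (one_ne_zero (α := B')))
      have h := hmul (-1 : B') (-1)
      rw [neg_mul_neg, one_mul, hone, hg, ← WithBot.coe_add] at h
      have hg0 : g + g = 0 := by exact_mod_cast h.symm
      rw [hg, gzero g hg0, WithBot.coe_zero]
    intro x
    rw [show (-x : B') = (-1 : B') * x by ring, hmul, hm1, zero_add]
  have hmap : ∀ (a : WithBot G) (g : G), WithBot.map (fun t => t - g) a = a + ↑(-g) := by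
    intro a g
    cases a with
    | bot => simp
    | coe t =>
      rw [WithBot.map_coe, ← WithBot.coe_add, WithBot.coe_inj, sub_eq_add_neg]
  have hdelta : ∀ (DD : B' → B') (x : B'),
      degDelta DEG DD x = DEG (DD x) + ↑(-(DEG x).unbotD 0) := fun DD x => hmap _ _
  have hshift : ∀ (a : WithBot G) (g h : G), ↑g + a + ↑h = a + ↑(g + h) := by
    intro a g h
    cases a with
    | bot => simp
    | coe t =>
      rw [← WithBot.coe_add, ← WithBot.coe_add, ← WithBot.coe_add, WithBot.coe_inj]
      abel
  have hkey : ∀ b : B, degDelta deg ⇑D b = degDelta DEG ⇑D' (A b) := by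
    intro b
    simp only [degDelta, hres, hAD]
  -- the new delta set is included in the old one
  have hsub : ∀ m ∈ degDeltaSet deg ⇑D, m ∈ degDeltaSet DEG ⇑D' := by
    rintro m ⟨x, hx, rfl⟩
    refine ⟨A x, fun h => hx (hinj (by rw [h, map_zero])), (hkey x).symm⟩
  obtain ⟨M, hMmem, hMub⟩ := htame D'
  -- multiplicativity bound for delta
  have key : ∀ x y : B', x ≠ 0 → y ≠ 0 →
      degDelta DEG ⇑D' (x * y) ≤ max (degDelta DEG ⇑D' x) (degDelta DEG ⇑D' y) := by
    intro x y hx hy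
    obtain ⟨gx, hgx⟩ := hne hx
    obtain ⟨gy, hgy⟩ := hne hy
    have hxy : DEG (x * y) = ↑(gx + gy) := by rw [hmul, hgx, hgy, WithBot.coe_add]
    have hL : D' (x * y) = x * D' y + y * D' x := by
      simpa [smul_eq_mul] using D'.leibniz x y
    have h1 : DEG (D' (x * y)) ≤ max (↑gx + DEG (D' y)) (↑gy + DEG (D' x)) := by
      rw [hL]
      refine (hadd _ _).trans (max_le_max (le_of_eq ?_) (le_of_eq ?_))
      · rw [hmul, hgx]
      · rw [hmul, hgy]
    rw [hdelta, hdelta, hdelta, hgx, hgy, hxy, WithBot.unbotD_coe, WithBot.unbotD_coe,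
      WithBot.unbotD_coe]
    rcases le_max_iff.mp h1 with h | h
    · refine le_max_of_le_right ?_
      calc DEG (D' (x * y)) + (↑(-(gx + gy)) : WithBot G)
          ≤ ↑gx + DEG (D' y) + ↑(-(gx + gy)) := add_le_add_left h _
        _ = DEG (D' y) + ↑(-gy) := by
            rw [hshift, show gx + -(gx + gy) = -gy by abel]
    · refine le_max_of_le_left ?_
      calc DEG (D' (x * y)) + (↑(-(gx + gy)) : WithBot G)
          ≤ ↑gy + DEG (D' x) + ↑(-(gx + gy)) := add_le_add_left h _
        _ = DEG (D' x) + ↑(-gx) := by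
            rw [hshift, show gy + -(gx + gy) = -gx by abel]
  -- pick a witness for M and write it as b / s
  obtain ⟨x₀, hx₀, hδx₀⟩ := hMmem
  obtain ⟨⟨b, s⟩, hbs⟩ := IsLocalization.mk'_surjective S x₀
  have hAbs : x₀ * A s = A b := by rw [← hbs]; exact IsLocalization.mk'_spec B' b s
  obtain ⟨u, hu⟩ := IsLocalization.map_units B' s
  set v : B' := ↑u⁻¹ with hv
  have hvu : v * A s = 1 := by rw [hv, ← hu]; exact u.inv_mul
  have hs0 : (s : B) ≠ 0 := fun h => hS (h ▸ s.2)
  have hAs0 : A s ≠ 0 := fun h => hs0 (hinj (by rw [h, map_zero]))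
  have hv0 : v ≠ 0 := by
    intro h
    rw [h, zero_mul] at hvu
    exact zero_ne_one hvu
  have hb0 : b ≠ 0 := by
    rintro rfl
    rw [map_zero] at hAbs
    apply hx₀
    calc x₀ = x₀ * (A s * v) := by rw [mul_comm (A s) v, hvu, mul_one]
      _ = x₀ * A s * v := by ring
      _ = 0 := by rw [hAbs, zero_mul]
  have hAb0 : A b ≠ 0 := fun h => hb0 (hinj (by rw [h, map_zero]))
  have hx₀eq : x₀ = A b * v := by
    rw [← hAbs]
    calc x₀ = x₀ * (A s * v) := by rw [mul_comm (A s) v, hvu, mul_one]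
      _ = x₀ * A s * v := by ring
  -- delta of the inverse equals delta of the element
  have hinv : degDelta DEG ⇑D' v = degDelta DEG ⇑D' (A s) := by
    obtain ⟨gu, hgu⟩ := hne hAs0
    obtain ⟨gv, hgv⟩ := hne hv0
    have hguv : gv + gu = 0 := by
      have h := hmul v (A s)
      rw [hvu, hone, hgv, hgu, ← WithBot.coe_add] at h
      exact_mod_cast h.symm
    have h0 : A s * D' v + v * D' (A s) = 0 := by
      have h := D'.leibniz v (A s)
      rw [hvu, D'.map_one_eq_zero] at h
      simpa [smul_eq_mul, add_comm] using h.symm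
    have hDv : D' v = -(v * v * D' (A s)) := by
      linear_combination v * h0 - (D' v) * hvu
    have hDEGDv : DEG (D' v) = ↑gv + (↑gv + DEG (D' (A s))) := by
      rw [hDv, hneg, hmul, hmul, hgv, add_assoc]
    rw [hdelta, hdelta, hgv, hgu, WithBot.unbotD_coe, WithBot.unbotD_coe, hDEGDv,
      ← add_assoc, ← WithBot.coe_add, hshift,
      show gv + gv + -gv = -gu by rw [← neg_eq_of_add_eq_zero_left hguv]; abel]
  -- conclude
  have hb_le : degDelta DEG ⇑D' (A b) ≤ M := hMub ⟨A b, hAb0, rfl⟩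
  have hs_le : degDelta DEG ⇑D' (A s) ≤ M := hMub ⟨A s, hAs0, rfl⟩
  have hmax : M ≤ max (degDelta DEG ⇑D' (A b)) (degDelta DEG ⇑D' (A s)) := by
    rw [← hδx₀, hx₀eq]
    refine (key (A b) v hAb0 hv0).trans ?_
    rw [hinv]
  refine ⟨M, ?_, fun m hm => hMub (hsub m hm)⟩
  rcases le_max_iff.mp hmax with h | h
  · exact ⟨b, hb0, (hkey b).trans (le_antisymm hb_le h)⟩
  · exact ⟨s, hs0, (hkey s).trans (le_antisymm hs_le h)⟩
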